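/- arXiv:1903.12112 — 2 statements merged into one kernel-verified Lean document; each statement's English description precedes it below -/
import Mathlib

section
/- A graph admits a 2-factorization (a partition of its edge set into spanning 2-regular subgraphs) if and only if it is regular of even degree. -/
set_option linter.unusedSectionVars false

open SimpleGraph Finset

variable {V : Type} [Fintype V] [DecidableEq V]

lemma trail_extend {G : SimpleGraph V} [DecidableRel G.Adj]
    (heven : ∀ v, Even (G.degree v)) {a v : V} (p : G.Walk a v) (ht : p.IsTrail)
    (hne : a ≠ v) : ∃ w, ∃ _h : G.Adj v w, s(v, w) ∉ p.edges := by
  by_contra hcon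
  push_neg at hcon
  have hodd : ¬ Even (p.edges.countP fun e => v ∈ e) := by
    rw [ht.even_countP_edges_iff]
    intro h
    exact (h hne).2 rfl
  apply hodd
  have hfn : (p.edges.filter fun e => v ∈ e).Nodup := ht.edges_nodup.filter _
  have hset : (p.edges.filter fun e => v ∈ e).toFinset = G.incidenceFinset v := by
    ext e
    simp only [List.mem_toFinset, List.mem_filter, mem_incidenceFinset, decide_eq_true_eq]
    constructor
    · rintro ⟨he, hv⟩
      exact ⟨p.edges_subset_edgeSet he, hv⟩
    · rintro ⟨he, hv⟩
      obtain ⟨w, rfl⟩ := Sym2.mem_iff_exists.mp hv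
      have hadj : G.Adj v w := he
      exact ⟨hcon w hadj, hv⟩
  have hlen : (p.edges.countP fun e => v ∈ e) = G.degree v := by
    rw [List.countP_eq_length_filter, ← List.toFinset_card_of_nodup hfn, hset,
      card_incidenceFinset_eq_degree]
  rw [hlen]
  exact heven v

lemma exists_closed_trail {G : SimpleGraph V} [DecidableRel G.Adj]
    (heven : ∀ v, Even (G.degree v)) {a b : V} (hab : G.Adj a b) :
    ∃ c : G.Walk a a, c.IsTrail ∧ c.edges ≠ [] := by
  suffices H : ∀ n (v : V) (p : G.Walk a v), p.IsTrail → p.edges ≠ [] →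
      G.edgeFinset.card - p.length ≤ n → ∃ c : G.Walk a a, c.IsTrail ∧ c.edges ≠ [] by
    refine H G.edgeFinset.card b (SimpleGraph.Walk.cons hab SimpleGraph.Walk.nil) ?_ (by simp) (by omega)
    simp [SimpleGraph.Walk.isTrail_def]
  intro n
  induction n with
  | zero =>
    intro v p ht hne hle
    rcases eq_or_ne a v with rfl | hav
    · exact ⟨p, ht, hne⟩
    · exfalso
      obtain ⟨w, hadj, hnotin⟩ := trail_extend heven p ht hav
      -- p.length < edgeFinset.card since edge s(v,w) not in p.edges
      have hsub : p.edges.toFinset ⊆ G.edgeFinset := by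
        intro e he
        rw [List.mem_toFinset] at he
        rw [mem_edgeFinset]
        exact p.edges_subset_edgeSet he
      have hcard : p.edges.toFinset.card < G.edgeFinset.card := by
        apply Finset.card_lt_card
        refine ⟨hsub, fun hsub2 => hnotin ?_⟩
        rw [← List.mem_toFinset]
        exact hsub2 (by rw [mem_edgeFinset]; exact hadj)
      rw [List.toFinset_card_of_nodup ht.edges_nodup, p.length_edges] at hcard
      omega
  | succ n ih =>
    intro v p ht hne hle
    rcases eq_or_ne a v with rfl | hav
    · exact ⟨p, ht, hne⟩
    · obtain ⟨w, hadj, hnotin⟩ := trail_extend heven p ht hav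
      refine ih w (p.concat hadj) ?_ (by simp [SimpleGraph.Walk.edges_concat]) ?_
      · rw [SimpleGraph.Walk.isTrail_def, SimpleGraph.Walk.edges_concat, List.concat_eq_append]
        exact List.Nodup.append ht.edges_nodup (List.nodup_singleton _)
          (by simpa using hnotin)
      · rw [SimpleGraph.Walk.length_concat]
        omega

def odeg (D : Finset (V × V)) (v : V) : ℕ := (D.filter fun p => p.1 = v).card
def ideg (D : Finset (V × V)) (v : V) : ℕ := (D.filter fun p => p.2 = v).card

lemma darts_nodup {G : SimpleGraph V} {u v : V} {p : G.Walk u v} (ht : p.IsTrail) :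
    p.darts.Nodup := by
  have h : (p.darts.map SimpleGraph.Dart.edge).Nodup := by
    rw [← SimpleGraph.Walk.edges]; exact ht.edges_nodup
  exact h.of_map _

lemma countP_fst_eq_countP_snd {G : SimpleGraph V} {a : V} (c : G.Walk a a) (v : V) :
    (c.darts.countP fun d => d.toProd.1 = v) = (c.darts.countP fun d => d.toProd.2 = v) := by
  have h := (c.map_fst_darts_append).trans (c.cons_map_snd_darts).symm
  have h2 := congrArg (List.countP fun x => decide (x = v)) h
  simp only [List.countP_append, List.countP_cons, List.countP_map, List.countP_nil,
    Function.comp_def] at h2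
  omega

lemma odeg_union {D T : Finset (V × V)} (h : Disjoint D T) (v : V) :
    odeg (D ∪ T) v = odeg D v + odeg T v := by
  unfold odeg
  rw [Finset.filter_union, Finset.card_union_of_disjoint (Finset.disjoint_filter_filter h)]

lemma ideg_union {D T : Finset (V × V)} (h : Disjoint D T) (v : V) :
    ideg (D ∪ T) v = ideg D v + ideg T v := by
  unfold ideg
  rw [Finset.filter_union, Finset.card_union_of_disjoint (Finset.disjoint_filter_filter h)]

lemma odeg_toFinset (L : List (V × V)) (h : L.Nodup) (v : V) :
    odeg L.toFinset v = L.countP (fun p => p.1 = v) := by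
  unfold odeg
  have heq : (L.filter fun p => decide (p.1 = v)).toFinset
      = L.toFinset.filter (fun p => p.1 = v) := by
    rw [List.toFinset_filter]
    apply Finset.filter_congr
    intro x _
    simp
  rw [← heq, List.toFinset_card_of_nodup (h.filter _), List.countP_eq_length_filter]

lemma ideg_toFinset (L : List (V × V)) (h : L.Nodup) (v : V) :
    ideg L.toFinset v = L.countP (fun p => p.2 = v) := by
  unfold ideg
  have heq : (L.filter fun p => decide (p.2 = v)).toFinset
      = L.toFinset.filter (fun p => p.2 = v) := by
    rw [List.toFinset_filter]
    apply Finset.filter_congr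
    intro x _
    simp
  rw [← heq, List.toFinset_card_of_nodup (h.filter _), List.countP_eq_length_filter]

set_option maxHeartbeats 1000000 in
lemma exists_orientation : ∀ (n : ℕ) (G : SimpleGraph V) [DecidableRel G.Adj],
    G.edgeFinset.card ≤ n → (∀ v, Even (G.degree v)) →
    ∃ D : Finset (V × V),
      (∀ p ∈ D, G.Adj p.1 p.2) ∧
      (∀ u v, G.Adj u v → ((u, v) ∈ D ↔ (v, u) ∉ D)) ∧
      (∀ v, odeg D v = ideg D v) := by
  intro n
  induction n with
  | zero =>
    intro G _ hcard _
    refine ⟨∅, by simp, fun u v huv => absurd ?_ (Finset.notMem_empty s(u,v)), by simp [odeg, ideg]⟩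
    rw [Nat.le_zero, Finset.card_eq_zero] at hcard
    rw [← hcard, SimpleGraph.mem_edgeFinset]
    exact huv
  | succ n ih =>
    intro G _ hcard heven
    rcases Finset.eq_empty_or_nonempty G.edgeFinset with hemp | ⟨e, he⟩
    · refine ⟨∅, by simp, fun u v huv => absurd ?_ (Finset.notMem_empty s(u,v)), by simp [odeg, ideg]⟩
      rw [← hemp, SimpleGraph.mem_edgeFinset]; exact huv
    · obtain ⟨a, b, hab⟩ : ∃ a b, G.Adj a b := by
        revert he
        refine e.ind ?_
        intro a b he
        exact ⟨a, b, SimpleGraph.mem_edgeFinset.mp he⟩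
      obtain ⟨c, hct, hcne⟩ := exists_closed_trail heven hab
      set G' : SimpleGraph V := G.deleteEdges {e | e ∈ c.edges} with hG'
      haveI : DecidableRel G'.Adj := fun u v =>
        decidable_of_iff (G.Adj u v ∧ ¬ s(u,v) ∈ c.edges) (by rw [hG', SimpleGraph.deleteEdges_adj]; rfl)
      have hG'adj : ∀ u v, G'.Adj u v ↔ (G.Adj u v ∧ s(u,v) ∉ c.edges) := by
        intro u v; rw [hG', SimpleGraph.deleteEdges_adj]; rfl
      have hEsub : c.edges.toFinset ⊆ G.edgeFinset := by
        intro e he'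
        rw [List.mem_toFinset] at he'
        exact SimpleGraph.mem_edgeFinset.mpr (c.edges_subset_edgeSet he')
      have hE' : G'.edgeFinset = G.edgeFinset \ c.edges.toFinset := by
        ext e
        rw [SimpleGraph.mem_edgeFinset, Finset.mem_sdiff, SimpleGraph.mem_edgeFinset, hG',
          SimpleGraph.edgeSet_deleteEdges]
        simp [Set.mem_diff]
      have hcardE' : G'.edgeFinset.card ≤ n := by
        rw [hE', Finset.card_sdiff_of_subset hEsub]
        have h1 : 1 ≤ c.edges.toFinset.card := by
          rw [Finset.one_le_card]
          obtain ⟨e, he'⟩ := List.exists_mem_of_ne_nil _ hcne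
          exact ⟨e, List.mem_toFinset.mpr he'⟩
        omega
      have hdeg' : ∀ v, G'.degree v = G.degree v - (c.edges.countP fun e => v ∈ e) := by
        intro v
        rw [← SimpleGraph.card_incidenceFinset_eq_degree, ← SimpleGraph.card_incidenceFinset_eq_degree]
        have hinc : G'.incidenceFinset v
            = G.incidenceFinset v \ (c.edges.filter fun e => v ∈ e).toFinset := by
          ext e
          rw [SimpleGraph.mem_incidenceFinset, Finset.mem_sdiff, SimpleGraph.mem_incidenceFinset]
          simp only [SimpleGraph.incidenceSet, Set.mem_setOf_eq, List.mem_toFinset, List.mem_filter,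
            hG', SimpleGraph.edgeSet_deleteEdges, Set.mem_diff, Set.mem_setOf_eq,
            decide_eq_true_eq]
          tauto
        rw [hinc, Finset.card_sdiff_of_subset]
        · congr 1
          rw [List.toFinset_card_of_nodup (hct.edges_nodup.filter _), List.countP_eq_length_filter]
        · intro e he'
          rw [List.mem_toFinset, List.mem_filter] at he'
          rw [SimpleGraph.mem_incidenceFinset]
          exact ⟨c.edges_subset_edgeSet he'.1, by simpa using he'.2⟩
      have hcnt_even : ∀ v, Even (c.edges.countP fun e => v ∈ e) := by
        intro v
        rw [hct.even_countP_edges_iff]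
        simp
      have hcnt_le : ∀ v, (c.edges.countP fun e => v ∈ e) ≤ G.degree v := by
        intro v
        rw [List.countP_eq_length_filter, ← List.toFinset_card_of_nodup (hct.edges_nodup.filter _),
          ← SimpleGraph.card_incidenceFinset_eq_degree]
        apply Finset.card_le_card
        intro e he'
        rw [List.mem_toFinset, List.mem_filter] at he'
        rw [SimpleGraph.mem_incidenceFinset]
        exact ⟨c.edges_subset_edgeSet he'.1, by simpa using he'.2⟩
      have heven' : ∀ v, Even (G'.degree v) := by
        intro v
        rw [hdeg' v]
        obtain ⟨x, hx⟩ := heven v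
        obtain ⟨y, hy⟩ := hcnt_even v
        exact ⟨x - y, by have := hcnt_le v; omega⟩
      obtain ⟨D', hD'adj, hD'xor, hD'bal⟩ := ih G' hcardE' heven'
      set L : List (V × V) := c.darts.map fun d => d.toProd with hL
      have hLnodup : L.Nodup := by
        refine List.Nodup.map ?_ (darts_nodup hct)
        intro d1 d2 h
        exact SimpleGraph.Dart.ext d1 d2 h
      set T : Finset (V × V) := L.toFinset with hT
      have hTmem : ∀ u v : V, (u, v) ∈ T ↔ ∃ d ∈ c.darts, d.toProd = (u, v) := by
        intro u v
        rw [hT, List.mem_toFinset, hL]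
        simp
      have hTadj : ∀ p ∈ T, G.Adj p.1 p.2 := by
        rintro ⟨u, v⟩ hp
        obtain ⟨d, _, hd⟩ := (hTmem u v).mp hp
        have := d.adj
        rw [show d.toProd.1 = u from by rw [hd], show d.toProd.2 = v from by rw [hd]] at this
        exact this
      have hTedge : ∀ u v : V, (u, v) ∈ T → s(u, v) ∈ c.edges := by
        intro u v hp
        obtain ⟨d, hd1, hd2⟩ := (hTmem u v).mp hp
        have hde : d.edge = s(u, v) := by
          show s(d.toProd.1, d.toProd.2) = _
          rw [hd2]
        rw [← hde]
        exact List.mem_map_of_mem (f := SimpleGraph.Dart.edge) hd1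
      have hDT : Disjoint D' T := by
        rw [Finset.disjoint_left]
        rintro ⟨u, v⟩ hD hTm
        have h1 := hD'adj _ hD
        rw [hG'adj] at h1
        exact h1.2 (hTedge u v hTm)
      refine ⟨D' ∪ T, ?_, ?_, ?_⟩
      · rintro p hp
        rcases Finset.mem_union.mp hp with h | h
        · exact ((hG'adj p.1 p.2).mp (hD'adj p h)).1
        · exact hTadj p h
      · intro u v huv
        rcases Classical.em (s(u,v) ∈ c.edges) with hmem | hmem
        · have hnD' : ∀ x y : V, s(x,y) = s(u,v) → (x, y) ∉ D' := by
            intro x y hxy hD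
            have h1 := hD'adj _ hD
            rw [hG'adj] at h1
            exact h1.2 (by rw [hxy]; exact hmem)
          obtain ⟨d, hd1, hd2⟩ : ∃ d ∈ c.darts, d.edge = s(u, v) := by
            have hmem' : s(u,v) ∈ c.darts.map SimpleGraph.Dart.edge := hmem
            obtain ⟨d, hd1, hd2⟩ := List.mem_map.mp hmem'
            exact ⟨d, hd1, hd2⟩
          have huniq : ¬ ((u, v) ∈ T ∧ (v, u) ∈ T) := by
            rintro ⟨h1, h2⟩
            obtain ⟨d1, hd11, hd12⟩ := (hTmem u v).mp h1
            obtain ⟨d2, hd21, hd22⟩ := (hTmem v u).mp h2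
            have hne12 : d1 ≠ d2 := by
              intro h
              rw [h, hd22] at hd12
              exact huv.ne (congrArg Prod.fst hd12).symm
            have hinj := List.inj_on_of_nodup_map (f := SimpleGraph.Dart.edge)
              (l := c.darts) hct.edges_nodup
            exact hne12 (hinj hd11 hd21 (by
              show s(d1.toProd.1, d1.toProd.2) = s(d2.toProd.1, d2.toProd.2)
              rw [hd12, hd22]
              exact Sym2.eq_swap))
          have hex : (u, v) ∈ T ∨ (v, u) ∈ T := by
            have hd2' : s(d.toProd.1, d.toProd.2) = s(u, v) := hd2
            rw [Sym2.eq_iff] at hd2'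
            rcases hd2' with ⟨h1, h2⟩ | ⟨h1, h2⟩
            · left; exact (hTmem u v).mpr ⟨d, hd1, Prod.ext h1 h2⟩
            · right; exact (hTmem v u).mpr ⟨d, hd1, Prod.ext h1 h2⟩
          simp only [Finset.mem_union]
          constructor
          · rintro h1 h2
            rcases h2 with h2 | h2
            · exact hnD' v u Sym2.eq_swap h2
            · rcases h1 with h1 | h1
              · exact hnD' u v rfl h1
              · exact huniq ⟨h1, h2⟩
          · intro h1
            rcases hex with h | h
            · exact Or.inr h
            · exact absurd (Or.inr h) h1
        · have hG'uv : G'.Adj u v := (hG'adj u v).mpr ⟨huv, hmem⟩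
          have hnT : ∀ x y : V, s(x,y) = s(u,v) → (x, y) ∉ T := by
            intro x y hxy hTm
            exact hmem (by rw [← hxy]; exact hTedge x y hTm)
          have h1 : ((u,v) ∈ D' ∪ T) ↔ (u,v) ∈ D' := by
            simp only [Finset.mem_union]
            exact or_iff_left (hnT u v rfl)
          have h2 : ((v,u) ∈ D' ∪ T) ↔ (v,u) ∈ D' := by
            simp only [Finset.mem_union]
            exact or_iff_left (hnT v u Sym2.eq_swap)
          rw [h1, h2]
          exact hD'xor u v hG'uv
      · intro v
        rw [odeg_union hDT, ideg_union hDT, hD'bal v, hT, odeg_toFinset L hLnodup,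
          ideg_toFinset L hLnodup, hL, List.countP_map, List.countP_map]
        congr 1
        have := countP_fst_eq_countP_snd c v
        simpa [Function.comp_def] using this

set_option maxHeartbeats 1000000 in
lemma perm_decomp : ∀ (k : ℕ) (D : Finset (V × V)),
    (∀ v, odeg D v = k) → (∀ v, ideg D v = k) →
    ∃ f : Fin k → V → V,
      (∀ i, Function.Injective (f i)) ∧
      (∀ i u, (u, f i u) ∈ D) ∧
      (∀ u v, (u, v) ∈ D → ∃ i, f i u = v) ∧
      (∀ i j u, f i u = f j u → i = j) := by
  intro k
  induction k with
  | zero =>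
    intro D hout _
    have hD : D = ∅ := by
      rw [← Finset.not_nonempty_iff_eq_empty]
      rintro ⟨⟨u, v⟩, huv⟩
      have h0 := hout u
      rw [odeg, Finset.card_eq_zero] at h0
      have hmem : (u, v) ∈ D.filter (fun p => p.1 = u) := Finset.mem_filter.mpr ⟨huv, rfl⟩
      rw [h0] at hmem
      exact Finset.notMem_empty _ hmem
    exact ⟨Fin.elim0, fun i => i.elim0, fun i => i.elim0,
      fun u v huv => absurd huv (hD ▸ Finset.notMem_empty _), fun i => i.elim0⟩
  | succ k ihk =>
    intro D hout hin
    set t : V → Finset V := fun u => (D.filter fun p => p.1 = u).image Prod.snd with ht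
    have hcardt : ∀ u, (t u).card = k + 1 := by
      intro u
      rw [ht]
      rw [Finset.card_image_of_injOn, ← odeg, hout u]
      rintro ⟨a, b⟩ ha ⟨c, d⟩ hc h
      simp only [Finset.mem_coe, Finset.mem_filter] at ha hc
      simp only at h
      rw [Prod.ext_iff]
      exact ⟨ha.2.trans hc.2.symm, h⟩
    have hmemt : ∀ u w, w ∈ t u ↔ (u, w) ∈ D := by
      intro u w
      rw [ht]
      simp only [Finset.mem_image, Finset.mem_filter]
      constructor
      · rintro ⟨⟨a, b⟩, ⟨hab, ha⟩, hb⟩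
        simp only at ha hb
        rwa [← ha, ← hb]
      · intro h
        exact ⟨(u, w), ⟨h, rfl⟩, rfl⟩
    -- Hall's condition
    have hhall : ∀ s : Finset V, s.card ≤ (s.biUnion t).card := by
      intro s
      have hA : (D.filter fun p => p.1 ∈ s) = s.biUnion (fun u => D.filter fun p => p.1 = u) := by
        ext ⟨a, b⟩
        simp only [Finset.mem_filter, Finset.mem_biUnion]
        constructor
        · rintro ⟨h1, h2⟩; exact ⟨a, h2, h1, rfl⟩
        · rintro ⟨u, hu, h1, h2⟩; subst h2; exact ⟨h1, hu⟩
      have hcardA : (D.filter fun p => p.1 ∈ s).card = s.card * (k + 1) := by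
        rw [hA, Finset.card_biUnion]
        · have hsc : ∑ u ∈ s, (D.filter fun p => p.1 = u).card = ∑ _u ∈ s, (k + 1) :=
            Finset.sum_congr rfl fun u _ => hout u
          rw [hsc, Finset.sum_const, smul_eq_mul]
        · intro x _ y _ hxy
          rw [Function.onFun, Finset.disjoint_filter]
          rintro ⟨a, b⟩ _ h1 h2
          exact hxy (h1.symm.trans h2)
      have hB : (D.filter fun p => p.2 ∈ s.biUnion t)
          = (s.biUnion t).biUnion (fun v => D.filter fun p => p.2 = v) := by
        ext ⟨a, b⟩
        simp only [Finset.mem_filter, Finset.mem_biUnion]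
        constructor
        · rintro ⟨h1, h2⟩
          exact ⟨b, h2, h1, rfl⟩
        · rintro ⟨v, hv, h1, h2⟩; subst h2; exact ⟨h1, hv⟩
      have hcardB : (D.filter fun p => p.2 ∈ s.biUnion t).card = (s.biUnion t).card * (k + 1) := by
        rw [hB, Finset.card_biUnion]
        · have hsc : ∑ v ∈ s.biUnion t, (D.filter fun p => p.2 = v).card
              = ∑ _v ∈ s.biUnion t, (k + 1) :=
            Finset.sum_congr rfl fun v _ => hin v
          rw [hsc, Finset.sum_const, smul_eq_mul]
        · intro x _ y _ hxy
          rw [Function.onFun, Finset.disjoint_filter]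
          rintro ⟨a, b⟩ _ h1 h2
          exact hxy (h1.symm.trans h2)
      have hsub : (D.filter fun p => p.1 ∈ s) ⊆ (D.filter fun p => p.2 ∈ s.biUnion t) := by
        rintro ⟨a, b⟩ hp
        rw [Finset.mem_filter] at hp ⊢
        refine ⟨hp.1, Finset.mem_biUnion.mpr ⟨a, hp.2, (hmemt a b).mpr hp.1⟩⟩
      have := Finset.card_le_card hsub
      rw [hcardA, hcardB] at this
      exact Nat.le_of_mul_le_mul_right this (Nat.succ_pos k)
    obtain ⟨f0, hf0inj, hf0t⟩ := (Finset.all_card_le_biUnion_card_iff_exists_injective t).mp hhall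
    have hf0D : ∀ u, (u, f0 u) ∈ D := fun u => (hmemt u (f0 u)).mp (hf0t u)
    have hf0surj : Function.Surjective f0 :=
      (Finite.injective_iff_bijective.mp hf0inj).2
    set M : Finset (V × V) := Finset.univ.image (fun u => (u, f0 u)) with hM
    have hMmem : ∀ p : V × V, p ∈ M ↔ p.2 = f0 p.1 := by
      rintro ⟨a, b⟩
      rw [hM]
      simp only [Finset.mem_image, Finset.mem_univ, true_and, Prod.mk.injEq]
      constructor
      · rintro ⟨u, h1, h2⟩
        subst h1
        exact h2.symm
      · rintro h
        exact ⟨a, rfl, h.symm⟩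
    have hMsub : M ⊆ D := by
      rintro ⟨a, b⟩ hp
      rw [hMmem] at hp
      simp only at hp
      rw [hp]
      exact hf0D a
    set D'' : Finset (V × V) := D \ M with hD''
    have hD''out : ∀ u, odeg D'' u = k := by
      intro u
      have hfM : M.filter (fun p => p.1 = u) = {(u, f0 u)} := by
        ext ⟨a, b⟩
        rw [Finset.mem_filter, hMmem, Finset.mem_singleton]
        simp only [Prod.mk.injEq]
        constructor
        · rintro ⟨h1, h2⟩
          exact ⟨h2, by rw [← h2]; exact h1⟩
        · rintro ⟨h1, h2⟩
          exact ⟨by rw [h1, h2], h1⟩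
      have : D''.filter (fun p => p.1 = u) = (D.filter fun p => p.1 = u) \ (M.filter fun p => p.1 = u) := by
        rw [hD'']
        ext p
        simp only [Finset.mem_filter, Finset.mem_sdiff]
        tauto
      rw [odeg, this, Finset.card_sdiff_of_subset (Finset.filter_subset_filter _ hMsub), hfM,
        Finset.card_singleton, ← odeg, hout u]
      omega
    have hD''in : ∀ v, ideg D'' v = k := by
      intro v
      obtain ⟨u, hu⟩ := hf0surj v
      have hfM : M.filter (fun p => p.2 = v) = {(u, f0 u)} := by
        ext ⟨a, b⟩
        rw [Finset.mem_filter, hMmem, Finset.mem_singleton]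
        simp only [Prod.mk.injEq]
        constructor
        · rintro ⟨h1, h2⟩
          have ha : a = u := hf0inj (by rw [← h1, h2]; exact hu.symm)
          exact ⟨ha, by rw [h1, ha]⟩
        · rintro ⟨h1, h2⟩
          exact ⟨by rw [h2, h1], by rw [h2]; exact hu⟩
      have : D''.filter (fun p => p.2 = v) = (D.filter fun p => p.2 = v) \ (M.filter fun p => p.2 = v) := by
        rw [hD'']
        ext p
        simp only [Finset.mem_filter, Finset.mem_sdiff]
        tauto
      rw [ideg, this, Finset.card_sdiff_of_subset (Finset.filter_subset_filter _ hMsub), hfM,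
        Finset.card_singleton, ← ideg, hin v]
      omega
    obtain ⟨f, hfinj, hfD, hfcov, hfdist⟩ := ihk D'' hD''out hD''in
    have hfD' : ∀ i u, (u, f i u) ∈ D ∧ (u, f i u) ∉ M := by
      intro i u
      have := hfD i u
      rw [hD'', Finset.mem_sdiff] at this
      exact this
    refine ⟨Fin.cons f0 f, ?_, ?_, ?_, ?_⟩
    · intro i
      induction i using Fin.cases with
      | zero => simpa using hf0inj
      | succ i => simpa using hfinj i
    · intro i u
      induction i using Fin.cases with
      | zero => simpa using hf0D u
      | succ i => simpa using (hfD' i u).1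
    · intro u v huv
      rcases eq_or_ne v (f0 u) with rfl | hv
      · exact ⟨0, by simp⟩
      · have : (u, v) ∈ D'' := by
          rw [hD'', Finset.mem_sdiff, hMmem]
          exact ⟨huv, hv⟩
        obtain ⟨i, hi⟩ := hfcov u v this
        exact ⟨i.succ, by simpa using hi⟩
    · intro i j u hij
      induction i using Fin.cases with
      | zero =>
        induction j using Fin.cases with
        | zero => rfl
        | succ j =>
          exfalso
          simp only [Fin.cons_zero, Fin.cons_succ] at hij
          exact (hfD' j u).2 (by rw [hMmem]; simp [← hij])
      | succ i =>
        induction j using Fin.cases with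
        | zero =>
          exfalso
          simp only [Fin.cons_zero, Fin.cons_succ] at hij
          exact (hfD' i u).2 (by rw [hMmem]; simp [hij])
        | succ j =>
          simp only [Fin.cons_succ] at hij
          rw [hfdist i j u hij]

set_option maxHeartbeats 1000000 in
theorem stmt16' {V : Type} [Fintype V] (G : SimpleGraph V) :
    (∃ (k : ℕ) (Fs : Fin k → SimpleGraph V),
      (∀ i, Fs i ≤ G ∧ ∀ v, ((Fs i).neighborSet v).ncard = 2) ∧
      (∀ i j, i ≠ j → ∀ u v, ¬ ((Fs i).Adj u v ∧ (Fs j).Adj u v)) ∧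
      (∀ u v, G.Adj u v → ∃ i, (Fs i).Adj u v)) ↔
    (∃ k : ℕ, ∀ v, (G.neighborSet v).ncard = 2 * k) := by
  classical
  constructor
  · rintro ⟨k, Fs, hfac, hdisj, hcov⟩
    refine ⟨k, fun v => ?_⟩
    have hset : G.neighborSet v = ⋃ i, (Fs i).neighborSet v := by
      ext w
      simp only [SimpleGraph.mem_neighborSet, Set.mem_iUnion]
      exact ⟨fun h => hcov v w h, fun ⟨i, hi⟩ => (hfac i).1 hi⟩
    rw [hset, Set.ncard_eq_toFinset_card', Set.toFinset_iUnion]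
    rw [Finset.card_biUnion]
    · have : ∀ i ∈ (Finset.univ : Finset (Fin k)), ((Fs i).neighborSet v).toFinset.card = 2 := by
        intro i _
        rw [← Set.ncard_eq_toFinset_card']
        exact (hfac i).2 v
      rw [Finset.sum_congr rfl this, Finset.sum_const, smul_eq_mul, Finset.card_univ,
        Fintype.card_fin, mul_comm]
    · intro i _ j _ hij
      rw [Function.onFun, Finset.disjoint_left]
      intro w hw1 hw2
      rw [Set.mem_toFinset, SimpleGraph.mem_neighborSet] at hw1 hw2
      exact hdisj i j hij v w ⟨hw1, hw2⟩
  · rintro ⟨k, hreg⟩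
    haveI : DecidableRel G.Adj := Classical.decRel G.Adj
    haveI : DecidableEq V := Classical.decEq V
    have hdeg : ∀ v, G.degree v = 2 * k := by
      intro v
      rw [← hreg v, Set.ncard_eq_toFinset_card']
      rfl
    have heven : ∀ v, Even (G.degree v) := fun v => by
      rw [hdeg]; exact ⟨k, by ring⟩
    obtain ⟨D, hDadj, hDxor, hDbal⟩ :=
      exists_orientation G.edgeFinset.card G le_rfl heven
    -- out-degree + in-degree = degree
    have hsum : ∀ v, odeg D v + ideg D v = G.degree v := by
      intro v
      have himg : G.neighborFinset v
          = ((D.filter fun p => p.1 = v).image Prod.snd)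
            ∪ ((D.filter fun p => p.2 = v).image Prod.fst) := by
        ext w
        simp only [SimpleGraph.mem_neighborFinset, Finset.mem_union, Finset.mem_image,
          Finset.mem_filter]
        constructor
        · intro h
          rcases Classical.em ((v, w) ∈ D) with hm | hm
          · exact Or.inl ⟨(v, w), ⟨hm, rfl⟩, rfl⟩
          · have : (w, v) ∈ D := by
              by_contra hm2
              exact hm ((hDxor v w h).mpr hm2)
            exact Or.inr ⟨(w, v), ⟨this, rfl⟩, rfl⟩
        · rintro (⟨⟨a, b⟩, ⟨hab, h1⟩, h2⟩ | ⟨⟨a, b⟩, ⟨hab, h1⟩, h2⟩)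
          · subst h1; subst h2; exact hDadj _ hab
          · subst h1; subst h2; exact (hDadj _ hab).symm
      rw [SimpleGraph.degree, himg, Finset.card_union_of_disjoint, odeg, ideg,
        Finset.card_image_of_injOn, Finset.card_image_of_injOn]
      · rintro ⟨a, b⟩ ha ⟨c, d⟩ hc h
        simp only [Finset.coe_filter, Set.mem_setOf_eq] at ha hc
        simp only at h
        rw [Prod.ext_iff]
        exact ⟨h, ha.2.trans hc.2.symm⟩
      · rintro ⟨a, b⟩ ha ⟨c, d⟩ hc h
        simp only [Finset.coe_filter, Set.mem_setOf_eq] at ha hc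
        simp only at h
        rw [Prod.ext_iff]
        exact ⟨ha.2.trans hc.2.symm, h⟩
      · rw [Finset.disjoint_left]
        rintro w hw1 hw2
        simp only [Finset.mem_image, Finset.mem_filter] at hw1 hw2
        obtain ⟨⟨a, b⟩, ⟨hab, h1⟩, h2⟩ := hw1
        obtain ⟨⟨c, d⟩, ⟨hcd, h3⟩, h4⟩ := hw2
        simp only at h1 h2 h3 h4
        rw [h1, h2] at hab
        rw [h3, h4] at hcd
        exact (hDxor v w (hDadj _ hab)).mp hab hcd
    have hodeg : ∀ v, odeg D v = k := by
      intro v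
      have h1 := hsum v
      have h2 := hDbal v
      rw [hdeg v] at h1
      omega
    have hideg : ∀ v, ideg D v = k := fun v => by rw [← hDbal v]; exact hodeg v
    obtain ⟨f, hfinj, hfD, hfcov, hfdist⟩ := perm_decomp k D hodeg hideg
    refine ⟨k, fun i => SimpleGraph.fromRel (fun u v => f i u = v), ?_, ?_, ?_⟩
    · intro i
      constructor
      · rintro u v h
        rw [SimpleGraph.fromRel_adj] at h
        obtain ⟨h1, h2 | h2⟩ := h
        · subst h2; exact hDadj _ (hfD i u)
        · subst h2; exact (hDadj _ (hfD i v)).symm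
      · intro v
        obtain ⟨w, hw⟩ := (Finite.injective_iff_bijective.mp (hfinj i)).2 v
        have hfv : G.Adj v (f i v) := hDadj _ (hfD i v)
        have hwv : G.Adj w v := by have := hDadj _ (hfD i w); rwa [hw] at this
        have hneq : f i v ≠ w := by
          intro h
          have h1 : (v, w) ∈ D := by have := hfD i v; rwa [h] at this
          have h2 : (w, v) ∈ D := by have := hfD i w; rwa [hw] at this
          exact (hDxor v w (hDadj _ h1)).mp h1 h2
        have hset : (SimpleGraph.fromRel fun u v => f i u = v).neighborSet v
            = {f i v, w} := by
          ext x
          simp only [SimpleGraph.mem_neighborSet, SimpleGraph.fromRel_adj,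
            Set.mem_insert_iff, Set.mem_singleton_iff]
          constructor
          · rintro ⟨h1, h2 | h2⟩
            · exact Or.inl h2.symm
            · exact Or.inr (hfinj i (h2.trans hw.symm))
          · rintro (rfl | rfl)
            · exact ⟨hfv.ne, Or.inl rfl⟩
            · exact ⟨hwv.ne', Or.inr hw⟩
        rw [hset]
        exact Set.ncard_pair hneq
    · rintro i j hij u v ⟨ha, hb⟩
      rw [SimpleGraph.fromRel_adj] at ha hb
      obtain ⟨h1, h2⟩ := ha
      obtain ⟨h3, h4⟩ := hb
      rcases h2 with h2 | h2 <;> rcases h4 with h4 | h4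
      · exact hij (hfdist i j u (h2.trans h4.symm))
      · have ha' : (u, v) ∈ D := by have := hfD i u; rwa [h2] at this
        have hb' : (v, u) ∈ D := by have := hfD j v; rwa [h4] at this
        exact (hDxor u v (hDadj _ ha')).mp ha' hb'
      · have ha' : (v, u) ∈ D := by have := hfD i v; rwa [h2] at this
        have hb' : (u, v) ∈ D := by have := hfD j u; rwa [h4] at this
        exact (hDxor u v (hDadj _ hb')).mp hb' ha'
      · exact hij (hfdist i j v (h2.trans h4.symm))
    · intro u v huv
      rcases Classical.em ((u, v) ∈ D) with hm | hm
      · obtain ⟨i, hi⟩ := hfcov u v hm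
        exact ⟨i, (SimpleGraph.fromRel_adj _ u v).mpr ⟨huv.ne, Or.inl hi⟩⟩
      · have hm2 : (v, u) ∈ D := by
          by_contra hm2
          exact hm ((hDxor u v huv).mpr hm2)
        obtain ⟨i, hi⟩ := hfcov v u hm2
        exact ⟨i, (SimpleGraph.fromRel_adj _ u v).mpr ⟨huv.ne, Or.inr hi⟩⟩


/-- Petersen's theorem: a finite graph admits a 2-factorization if and only if
it is regular of even degree. -/
theorem stmt16 {V : Type} [Fintype V] (G : SimpleGraph V) :
    (∃ (k : ℕ) (Fs : Fin k → SimpleGraph V),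
      -- each factor is a spanning 2-regular subgraph of G
      (∀ i, Fs i ≤ G ∧ ∀ v, ((Fs i).neighborSet v).ncard = 2) ∧
      -- the factors are pairwise edge-disjoint
      (∀ i j, i ≠ j → ∀ u v, ¬ ((Fs i).Adj u v ∧ (Fs j).Adj u v)) ∧
      -- and they cover every edge of G
      (∀ u v, G.Adj u v → ∃ i, (Fs i).Adj u v)) ↔
    (∃ k : ℕ, ∀ v, (G.neighborSet v).ncard = 2 * k) := by
  exact stmt16' G
end

section
/- Let n be odd and let F be a 2-regular graph on ({0,1} × Z_n) ∪ {∞} satisfying the 2-rotational conditions (neighbours of ∞ of forms (0,x_0),(1,x_1); Δ_{00}F = Δ_{11}F = Z_n\{0}; Δ_{01}F = Z_n). Suppose C is a cycle of F containing an edge {(0,y_0),(1,y_1)}. Let H be obtained from F by replacing this edge with the path (0,y_0), ∞′, (1,y_1), where ∞′ is a new vertex. Then I = {{∞,∞′}} ∪ {{(0,y_0)+g, (1,y_1)+g} : g ∈ Z_n} is a perfect matching of the complete graph on ({0,1}×Z_n) ∪ {∞,∞′}, and {H + g : g ∈ Z_n} is an edge-decomposition of K_{2n+2} − I. -/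
open Finset

/-- Vertices of `K_{2n+2}`: `({0,1} × Z_n) ∪ {∞, ∞′}`, with `∞′ = none`, `∞ = some none`. -/
abbrev W2 (n : ℕ) : Type := Option (Option (Bool × ZMod n))

/-- Translation by `g` on `({0,1} × Z_n) ∪ {∞, ∞′}`, fixing `∞` and `∞′`. -/
def obTranslate2' {n : ℕ} (H : SimpleGraph (W2 n)) (g : ZMod n) : SimpleGraph (W2 n) :=
  H.map (Equiv.optionCongr (Equiv.optionCongr
    ((Equiv.refl Bool).prodCongr (Equiv.addRight g)))).toEmbedding


lemma euniq_of_surj {β α : Type*} [DecidableEq α] (S : Finset β) (Tg : Finset α) (f : β → α)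
    (hmap : ∀ b ∈ S, f b ∈ Tg) (hsurj : ∀ a ∈ Tg, ∃ b ∈ S, f b = a) (hcard : S.card ≤ Tg.card) :
    ∀ a ∈ Tg, ∃! b, b ∈ S ∧ f b = a := by
  have himg : S.image f = Tg := by
    apply subset_antisymm
    · intro a ha
      obtain ⟨b, hb, rfl⟩ := Finset.mem_image.mp ha
      exact hmap b hb
    · intro a ha
      obtain ⟨b, hb, rfl⟩ := hsurj a ha
      exact Finset.mem_image_of_mem f hb
  have hinj : Set.InjOn f S := by
    apply Finset.injOn_of_card_image_eq
    refine le_antisymm Finset.card_image_le ?_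
    rw [himg]; exact hcard
  intro a ha
  obtain ⟨b, hb, rfl⟩ := hsurj a ha
  exact ⟨b, ⟨hb, rfl⟩, fun b' ⟨hb', he⟩ => hinj hb' hb he⟩

lemma card_le_of_surj {β α : Type*} [DecidableEq α] (S : Finset β) (Tg : Finset α) (f : β → α)
    (hsurj : ∀ a ∈ Tg, ∃ b ∈ S, f b = a) : Tg.card ≤ S.card := by
  have h1 : Tg ⊆ S.image f := by
    intro a ha
    obtain ⟨b, hb, rfl⟩ := hsurj a ha
    exact Finset.mem_image_of_mem f hb
  exact le_trans (Finset.card_le_card h1) Finset.card_image_le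

lemma twoRotCount {n : ℕ} [NeZero n] (F : SimpleGraph (Option (Bool × ZMod n)))
    (hreg : ∀ v, (F.neighborSet v).ncard = 2)
    (x₀ x₁ : ZMod n)
    (hinf : ∀ v, F.Adj none v ↔ v = some (false, x₀) ∨ v = some (true, x₁))
    (h00 : {d : ZMod n | ∃ a b : ZMod n,
      F.Adj (some (false, a)) (some (false, b)) ∧ a - b = d} = {d : ZMod n | d ≠ 0})
    (h11 : {d : ZMod n | ∃ a b : ZMod n,
      F.Adj (some (true, a)) (some (true, b)) ∧ a - b = d} = {d : ZMod n | d ≠ 0})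
    (h01 : {d : ZMod n | ∃ a b : ZMod n,
      F.Adj (some (false, a)) (some (true, b)) ∧ a - b = d} = Set.univ) :
    (∀ d : ZMod n, d ≠ 0 → ∃! p : ZMod n × ZMod n,
        F.Adj (some (false, p.1)) (some (false, p.2)) ∧ p.1 - p.2 = d) ∧
    (∀ d : ZMod n, d ≠ 0 → ∃! p : ZMod n × ZMod n,
        F.Adj (some (true, p.1)) (some (true, p.2)) ∧ p.1 - p.2 = d) ∧
    (∀ d : ZMod n, ∃! p : ZMod n × ZMod n,
        F.Adj (some (false, p.1)) (some (true, p.2)) ∧ p.1 - p.2 = d) := by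
  classical
  have hn1 : 1 ≤ n := Nat.one_le_iff_ne_zero.mpr (NeZero.ne n)
  set δ : ZMod n × ZMod n → ZMod n := fun q => q.1 - q.2 with hδ
  set B : Bool → Bool → Finset (ZMod n × ZMod n) := fun b c =>
    univ.filter (fun q => F.Adj (some (b, q.1)) (some (c, q.2))) with hB
  have hmem : ∀ b c q, q ∈ B b c ↔ F.Adj (some (b, q.1)) (some (c, q.2)) := by
    intro b c q; simp [hB]
  have H00 : ∀ d : ZMod n, (∃ a b, F.Adj (some (false,a)) (some (false,b)) ∧ a - b = d) ↔ d ≠ 0 :=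
    fun d => Set.ext_iff.mp h00 d
  have H11 : ∀ d : ZMod n, (∃ a b, F.Adj (some (true,a)) (some (true,b)) ∧ a - b = d) ↔ d ≠ 0 :=
    fun d => Set.ext_iff.mp h11 d
  have H01 : ∀ d : ZMod n, ∃ a b, F.Adj (some (false,a)) (some (true,b)) ∧ a - b = d := by
    intro d
    have := Set.ext_iff.mp h01 d
    simpa using this.mpr trivial
  -- target finsets
  set Tg0 : Finset (ZMod n) := univ.erase 0 with hTg0
  have hTg0card : Tg0.card = n - 1 := by
    rw [hTg0, Finset.card_erase_of_mem (mem_univ 0), Finset.card_univ, ZMod.card]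
  have hTguniv : (univ : Finset (ZMod n)).card = n := by rw [Finset.card_univ, ZMod.card]
  -- surjectivity onto targets
  have hs00 : ∀ d ∈ Tg0, ∃ q ∈ B false false, δ q = d := by
    intro d hd
    obtain ⟨a, b, hab, he⟩ := (H00 d).mpr (Finset.mem_erase.mp hd).1
    exact ⟨(a,b), (hmem _ _ _).mpr hab, he⟩
  have hs11 : ∀ d ∈ Tg0, ∃ q ∈ B true true, δ q = d := by
    intro d hd
    obtain ⟨a, b, hab, he⟩ := (H11 d).mpr (Finset.mem_erase.mp hd).1
    exact ⟨(a,b), (hmem _ _ _).mpr hab, he⟩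
  have hs01 : ∀ d ∈ (univ : Finset (ZMod n)), ∃ q ∈ B false true, δ q = d := by
    intro d _
    obtain ⟨a, b, hab, he⟩ := H01 d
    exact ⟨(a,b), (hmem _ _ _).mpr hab, he⟩
  -- maps into targets
  have hm00 : ∀ q ∈ B false false, δ q ∈ Tg0 := by
    intro q hq
    refine Finset.mem_erase.mpr ⟨?_, mem_univ _⟩
    exact (H00 (δ q)).mp ⟨q.1, q.2, (hmem _ _ _).mp hq, rfl⟩
  have hm11 : ∀ q ∈ B true true, δ q ∈ Tg0 := by
    intro q hq
    refine Finset.mem_erase.mpr ⟨?_, mem_univ _⟩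
    exact (H11 (δ q)).mp ⟨q.1, q.2, (hmem _ _ _).mp hq, rfl⟩
  -- lower bounds
  have hl00 : n - 1 ≤ (B false false).card := by
    have := card_le_of_surj _ _ _ hs00; rwa [hTg0card] at this
  have hl11 : n - 1 ≤ (B true true).card := by
    have := card_le_of_surj _ _ _ hs11; rwa [hTg0card] at this
  have hl01 : n ≤ (B false true).card := by
    have := card_le_of_surj _ _ _ hs01; rwa [hTguniv] at this
  -- total count
  haveI : DecidableRel F.Adj := Classical.decRel _
  set T : Finset ((Option (Bool × ZMod n)) × (Option (Bool × ZMod n))) :=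
    univ.filter (fun p => F.Adj p.1 p.2) with hT
  have hdeg : ∀ v, F.degree v = 2 := by
    intro v
    rw [← hreg v, SimpleGraph.degree, Set.ncard_eq_toFinset_card']
    congr 1
  have hTcard : T.card = 4 * n + 2 := by
    have h1 : T.card = ∑ v, F.degree v := by
      rw [← SimpleGraph.dart_card_eq_sum_degrees, ← Fintype.card_subtype]
      rw [Fintype.card_eq]
      exact ⟨⟨fun p => ⟨p.1, p.2⟩, fun d => ⟨d.toProd, d.adj⟩, fun p => rfl, fun d => rfl⟩⟩
    have h2 : ∑ v, F.degree v = Fintype.card (Option (Bool × ZMod n)) * 2 := by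
      simp [hdeg, Finset.sum_const, Finset.card_univ]
    have h3 : Fintype.card (Option (Bool × ZMod n)) = 2 * n + 1 := by
      simp [ZMod.card]
    rw [h1, h2, h3]; ring
  -- splitting
  have hsplit : ∀ (s : Finset (Option (Bool × ZMod n) × Option (Bool × ZMod n)))
      (P : Option (Bool × ZMod n) × Option (Bool × ZMod n) → Prop) [DecidablePred P],
      s.card = (s.filter P).card + (s.filter (fun p => ¬ P p)).card :=
    fun s P _ => (Finset.card_filter_add_card_filter_not P).symm
  have hinf' : ∀ v, F.Adj v none ↔ v = some (false, x₀) ∨ v = some (true, x₁) := by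
    intro v; rw [F.adj_comm]; exact hinf v
  have e1 : (T.filter (fun p => p.1 = none)) =
      {((none : Option (Bool × ZMod n)), some (false,x₀)), (none, some (true,x₁))} := by
    ext p
    obtain ⟨u, v⟩ := p
    simp only [hT, Finset.mem_filter, Finset.filter_filter, Finset.mem_univ, true_and,
      Finset.mem_insert, Finset.mem_singleton, Prod.mk.injEq]
    constructor
    · rintro ⟨hadj, rfl⟩
      rcases (hinf v).mp hadj with h | h
      · exact Or.inl ⟨rfl, h⟩
      · exact Or.inr ⟨rfl, h⟩
    · rintro (⟨rfl, rfl⟩ | ⟨rfl, rfl⟩)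
      · exact ⟨(hinf _).mpr (Or.inl rfl), rfl⟩
      · exact ⟨(hinf _).mpr (Or.inr rfl), rfl⟩
  have c1 : (T.filter (fun p => p.1 = none)).card = 2 := by
    rw [e1, Finset.card_insert_of_notMem (by simp), Finset.card_singleton]
  set R1 : Finset ((Option (Bool × ZMod n)) × (Option (Bool × ZMod n))) :=
    T.filter (fun p => ¬ p.1 = none) with hR1
  have e2 : (R1.filter (fun p => p.2 = none)) =
      {((some (false,x₀) : Option (Bool × ZMod n)), none), (some (true,x₁), none)} := by
    ext p
    obtain ⟨u, v⟩ := p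
    simp only [hR1, hT, Finset.mem_filter, Finset.mem_univ, true_and,
      Finset.mem_insert, Finset.mem_singleton, Prod.mk.injEq]
    constructor
    · rintro ⟨⟨hadj, _⟩, rfl⟩
      rcases (hinf' u).mp hadj with h | h
      · exact Or.inl ⟨h, rfl⟩
      · exact Or.inr ⟨h, rfl⟩
    · rintro (⟨rfl, rfl⟩ | ⟨rfl, rfl⟩)
      · exact ⟨⟨(hinf' _).mpr (Or.inl rfl), by simp⟩, rfl⟩
      · exact ⟨⟨(hinf' _).mpr (Or.inr rfl), by simp⟩, rfl⟩
  have c2 : (R1.filter (fun p => p.2 = none)).card = 2 := by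
    rw [e2, Finset.card_insert_of_notMem (by simp), Finset.card_singleton]
  set R2 : Finset ((Option (Bool × ZMod n)) × (Option (Bool × ZMod n))) :=
    R1.filter (fun p => ¬ p.2 = none) with hR2
  -- buckets
  have hbucket : ∀ b c : Bool,
      ((R2.filter (fun p => ∃ a, p.1 = some (b,a))).filter
        (fun p => ∃ a, p.2 = some (c,a))).card = (B b c).card := by
    intro b c
    symm
    apply Finset.card_bij (fun q _ =>
      ((some (b, q.1) : Option (Bool × ZMod n)), (some (c, q.2) : Option (Bool × ZMod n))))
    · intro q hq
      have hadj := (hmem b c q).mp hq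
      simp only [hR2, hR1, hT, Finset.mem_filter, Finset.mem_univ, true_and]
      exact ⟨⟨⟨⟨hadj, by simp⟩, by simp⟩, ⟨q.1, rfl⟩⟩, ⟨q.2, rfl⟩⟩
    · intro q hq q' hq' he
      simp only [Prod.mk.injEq, Option.some.injEq] at he
      exact Prod.ext he.1.2 he.2.2
    · intro p hp
      simp only [hR2, hR1, hT, Finset.mem_filter, Finset.mem_univ, true_and] at hp
      obtain ⟨⟨⟨⟨hadj, _⟩, _⟩, ⟨a, ha⟩⟩, ⟨a', ha'⟩⟩ := hp
      refine ⟨(a, a'), ?_, ?_⟩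
      · rw [hmem]
        rw [ha, ha'] at hadj
        exact hadj
      · rw [← ha, ← ha']
  have hne1 : ∀ p ∈ R2, ¬ p.1 = none := by
    intro p hp
    simp only [hR2, hR1, Finset.mem_filter] at hp
    exact hp.1.2
  have hne2 : ∀ p ∈ R2, ¬ p.2 = none := by
    intro p hp
    simp only [hR2, Finset.mem_filter] at hp
    exact hp.2
  have hflip1 : R2.filter (fun p => ¬ ∃ a, p.1 = some (false, a)) =
      R2.filter (fun p => ∃ a, p.1 = some (true, a)) := by
    apply Finset.filter_congr
    intro p hp
    have h1 := hne1 p hp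
    rcases hu : p.1 with _ | ⟨b, a⟩
    · exact absurd hu h1
    · cases b <;> simp [hu]
  have hflip2 : ∀ (Q : (Option (Bool × ZMod n)) × (Option (Bool × ZMod n)) → Prop)
      [DecidablePred Q],
      ((R2.filter Q).filter (fun p => ¬ ∃ a, p.2 = some (false, a))) =
      ((R2.filter Q).filter (fun p => ∃ a, p.2 = some (true, a))) := by
    intro Q _
    apply Finset.filter_congr
    intro p hp
    have h2 := hne2 p (Finset.mem_filter.mp hp).1
    rcases hu : p.2 with _ | ⟨b, a⟩
    · exact absurd hu h2
    · cases b <;> simp [hu]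
  have hswap : (B true false).card = (B false true).card := by
    apply Finset.card_bij (fun q _ => (q.2, q.1))
    · intro q hq
      rw [hmem] at hq ⊢
      exact hq.symm
    · intro q hq q' hq' he
      simp only [Prod.mk.injEq] at he
      exact Prod.ext he.2 he.1
    · intro q hq
      rw [hmem] at hq
      exact ⟨(q.2, q.1), by rw [hmem]; exact hq.symm, rfl⟩
  have t1 : T.card = 2 + R1.card := by
    rw [hsplit T (fun p => p.1 = none), c1, hR1]
  have t2 : R1.card = 2 + R2.card := by
    rw [hsplit R1 (fun p => p.2 = none), c2, hR2]
  have t3 : R2.card = (R2.filter (fun p => ∃ a, p.1 = some (false, a))).card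
      + (R2.filter (fun p => ∃ a, p.1 = some (true, a))).card := by
    rw [hsplit R2 (fun p => ∃ a, p.1 = some (false, a)), hflip1]
  have t4 : (R2.filter (fun p => ∃ a, p.1 = some (false, a))).card
      = (B false false).card + (B false true).card := by
    rw [hsplit _ (fun p => ∃ a, p.2 = some (false, a)), hbucket false false,
      hflip2 _, hbucket false true]
  have t5 : (R2.filter (fun p => ∃ a, p.1 = some (true, a))).card
      = (B true false).card + (B true true).card := by
    rw [hsplit _ (fun p => ∃ a, p.2 = some (false, a)), hbucket true false,
      hflip2 _, hbucket true true]
  have hcards : (B false false).card ≤ n - 1 ∧ (B true true).card ≤ n - 1 ∧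
      (B false true).card ≤ n := by
    omega
  obtain ⟨hc00, hc11, hc01⟩ := hcards
  refine ⟨?_, ?_, ?_⟩
  · intro d hd
    obtain ⟨q, ⟨hqB, hqd⟩, huniq⟩ :=
      euniq_of_surj _ _ _ hm00 hs00 (by rw [hTg0card]; exact hc00) d
        (Finset.mem_erase.mpr ⟨hd, mem_univ d⟩)
    exact ⟨q, ⟨(hmem _ _ _).mp hqB, hqd⟩, fun p hp => huniq p ⟨(hmem _ _ _).mpr hp.1, hp.2⟩⟩
  · intro d hd
    obtain ⟨q, ⟨hqB, hqd⟩, huniq⟩ :=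
      euniq_of_surj _ _ _ hm11 hs11 (by rw [hTg0card]; exact hc11) d
        (Finset.mem_erase.mpr ⟨hd, mem_univ d⟩)
    exact ⟨q, ⟨(hmem _ _ _).mp hqB, hqd⟩, fun p hp => huniq p ⟨(hmem _ _ _).mpr hp.1, hp.2⟩⟩
  · intro d
    obtain ⟨q, ⟨hqB, hqd⟩, huniq⟩ :=
      euniq_of_surj _ _ _ (fun b _ => mem_univ (δ b)) hs01 (by rw [hTguniv]; exact hc01) d
        (mem_univ d)
    exact ⟨q, ⟨(hmem _ _ _).mp hqB, hqd⟩, fun p hp => huniq p ⟨(hmem _ _ _).mpr hp.1, hp.2⟩⟩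


section
variable {n : ℕ}

noncomputable def eqv (g : ZMod n) : W2 n ≃ W2 n :=
  Equiv.optionCongr (Equiv.optionCongr ((Equiv.refl Bool).prodCongr (Equiv.addRight g)))

lemma hmapadj (H : SimpleGraph (W2 n)) (g : ZMod n) (u v : W2 n) :
    (obTranslate2' H g).Adj u v ↔ H.Adj ((eqv g).symm u) ((eqv g).symm v) := by
  rw [obTranslate2', SimpleGraph.map_adj]
  constructor
  · rintro ⟨a, b, hab, rfl, rfl⟩
    show H.Adj ((eqv g).symm ((eqv g) a)) ((eqv g).symm ((eqv g) b))
    rw [Equiv.symm_apply_apply, Equiv.symm_apply_apply]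
    exact hab
  · intro h
    exact ⟨(eqv g).symm u, (eqv g).symm v, h, (eqv g).apply_symm_apply u,
      (eqv g).apply_symm_apply v⟩

lemma hs1 (g : ZMod n) : (eqv g).symm (none : W2 n) = none := rfl

lemma hs2 (g : ZMod n) : (eqv g).symm (some none : W2 n) = some none := rfl

lemma hs3 (g : ZMod n) (i : Bool) (a : ZMod n) :
    (eqv g).symm (some (some (i, a)) : W2 n) = some (some (i, a - g)) := by
  simp [eqv, ← Equiv.optionCongr_symm, sub_eq_add_neg]
end

section
variable {n : ℕ} (F : SimpleGraph (Option (Bool × ZMod n))) (x₀ x₁ y₀ y₁ : ZMod n)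
  (H : SimpleGraph (W2 n))

lemma Hadj_inf
    (hinf : ∀ v, F.Adj none v ↔ v = some (false, x₀) ∨ v = some (true, x₁))
    (hH : H = ((F.map Function.Embedding.some).deleteEdges
        {s((some (some (false, y₀)) : W2 n), some (some (true, y₁)))}) ⊔
      SimpleGraph.fromEdgeSet
        {s((none : W2 n), some (some (false, y₀))),
         s((none : W2 n), some (some (true, y₁)))}) (v : W2 n) :
    H.Adj (some none) v ↔ v = some (some (false, x₀)) ∨ v = some (some (true, x₁)) := by
  subst hH
  simp only [SimpleGraph.sup_adj, SimpleGraph.deleteEdges_adj, SimpleGraph.map_adj,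
    SimpleGraph.fromEdgeSet_adj, Set.mem_insert_iff, Set.mem_singleton_iff]
  constructor
  · rintro (⟨⟨a, b, hab, ha, hb⟩, -⟩ | ⟨h | h, -⟩)
    · have ha' : (some a : W2 n) = some none := ha
      obtain rfl : a = none := Option.some_injective _ ha'
      have hb' : (some b : W2 n) = v := hb
      rcases (hinf b).mp hab with h | h
      · left; rw [← hb', h]
      · right; rw [← hb', h]
    · rw [Sym2.eq_iff] at h
      rcases h with ⟨h1, -⟩ | ⟨h1, -⟩ <;> simp at h1
    · rw [Sym2.eq_iff] at h
      rcases h with ⟨h1, -⟩ | ⟨h1, -⟩ <;> simp at h1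
  · intro h
    left
    constructor
    · rcases h with rfl | rfl
      · exact ⟨none, some (false, x₀), (hinf _).mpr (Or.inl rfl), rfl, rfl⟩
      · exact ⟨none, some (true, x₁), (hinf _).mpr (Or.inr rfl), rfl, rfl⟩
    · rcases h with rfl | rfl <;> simp [Sym2.eq_iff]

lemma Hadj_infp
    (hH : H = ((F.map Function.Embedding.some).deleteEdges
        {s((some (some (false, y₀)) : W2 n), some (some (true, y₁)))}) ⊔
      SimpleGraph.fromEdgeSet
        {s((none : W2 n), some (some (false, y₀))),
         s((none : W2 n), some (some (true, y₁)))}) (v : W2 n) :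
    H.Adj none v ↔ v = some (some (false, y₀)) ∨ v = some (some (true, y₁)) := by
  subst hH
  simp only [SimpleGraph.sup_adj, SimpleGraph.deleteEdges_adj, SimpleGraph.map_adj,
    SimpleGraph.fromEdgeSet_adj, Set.mem_insert_iff, Set.mem_singleton_iff]
  constructor
  · rintro (⟨⟨a, b, hab, ha, hb⟩, -⟩ | ⟨h | h, hne⟩)
    · exact absurd ha (by simp [Function.Embedding.some])
    · rw [Sym2.eq_iff] at h
      rcases h with ⟨-, h2⟩ | ⟨h1, -⟩
      · left; exact h2
      · simp at h1
    · rw [Sym2.eq_iff] at h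
      rcases h with ⟨-, h2⟩ | ⟨h1, -⟩
      · right; exact h2
      · simp at h1
  · intro h
    right
    rcases h with rfl | rfl
    · exact ⟨Or.inl rfl, by simp⟩
    · exact ⟨Or.inr rfl, by simp⟩

lemma Hadj_mid
    (hH : H = ((F.map Function.Embedding.some).deleteEdges
        {s((some (some (false, y₀)) : W2 n), some (some (true, y₁)))}) ⊔
      SimpleGraph.fromEdgeSet
        {s((none : W2 n), some (some (false, y₀))),
         s((none : W2 n), some (some (true, y₁)))}) (i j : Bool) (a b : ZMod n) :
    H.Adj (some (some (i, a))) (some (some (j, b))) ↔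
      F.Adj (some (i, a)) (some (j, b)) ∧
      ¬((i = false ∧ a = y₀ ∧ j = true ∧ b = y₁) ∨
        (i = true ∧ a = y₁ ∧ j = false ∧ b = y₀)) := by
  subst hH
  simp only [SimpleGraph.sup_adj, SimpleGraph.deleteEdges_adj, SimpleGraph.map_adj,
    SimpleGraph.fromEdgeSet_adj, Set.mem_insert_iff, Set.mem_singleton_iff]
  constructor
  · rintro (⟨⟨c, d, hcd, hc, hd⟩, hne⟩ | ⟨h | h, -⟩)
    · have hc' : (some c : W2 n) = some (some (i, a)) := hc
      have hd' : (some d : W2 n) = some (some (j, b)) := hd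
      obtain rfl : c = some (i, a) := Option.some_injective _ hc'
      obtain rfl : d = some (j, b) := Option.some_injective _ hd'
      refine ⟨hcd, ?_⟩
      rintro (⟨rfl, rfl, rfl, rfl⟩ | ⟨rfl, rfl, rfl, rfl⟩)
      · exact hne rfl
      · exact hne (by rw [Sym2.eq_iff]; simp)
    · rw [Sym2.eq_iff] at h
      rcases h with ⟨h1, -⟩ | ⟨-, h2⟩
      · simp at h1
      · simp at h2
    · rw [Sym2.eq_iff] at h
      rcases h with ⟨h1, -⟩ | ⟨-, h2⟩
      · simp at h1
      · simp at h2
  · rintro ⟨hadj, hne⟩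
    left
    refine ⟨⟨some (i, a), some (j, b), hadj, rfl, rfl⟩, ?_⟩
    rw [Sym2.eq_iff]
    rintro (⟨h1, h2⟩ | ⟨h1, h2⟩)
    · apply hne
      left
      simp only [Option.some.injEq, Prod.mk.injEq] at h1 h2
      exact ⟨h1.1, h1.2, h2.1, h2.2⟩
    · apply hne
      right
      simp only [Option.some.injEq, Prod.mk.injEq] at h1 h2
      exact ⟨h1.1, h1.2, h2.1, h2.2⟩
end


lemma Iadj {n : ℕ} (y₀ y₁ : ZMod n) (I : SimpleGraph (W2 n))
    (hI : I = SimpleGraph.fromEdgeSet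
      ({s((none : W2 n), some (none : Option (Bool × ZMod n)))} ∪
       {e | ∃ g : ZMod n,
          e = s((some (some (false, y₀ + g)) : W2 n), some (some (true, y₁ + g)))}))
    (u v : W2 n) :
    I.Adj u v ↔ (u = none ∧ v = some none) ∨ (u = some none ∧ v = none) ∨
      (∃ g, u = some (some (false, y₀ + g)) ∧ v = some (some (true, y₁ + g))) ∨
      (∃ g, u = some (some (true, y₁ + g)) ∧ v = some (some (false, y₀ + g))) := by
  subst hI
  rw [SimpleGraph.fromEdgeSet_adj]
  simp only [Set.mem_union, Set.mem_singleton_iff, Set.mem_setOf_eq]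
  constructor
  · rintro ⟨h | ⟨g, hg⟩, hne⟩
    · rw [Sym2.eq_iff] at h
      rcases h with ⟨rfl, rfl⟩ | ⟨rfl, rfl⟩
      · exact Or.inl ⟨rfl, rfl⟩
      · exact Or.inr (Or.inl ⟨rfl, rfl⟩)
    · rw [Sym2.eq_iff] at hg
      rcases hg with ⟨rfl, rfl⟩ | ⟨rfl, rfl⟩
      · exact Or.inr (Or.inr (Or.inl ⟨g, rfl, rfl⟩))
      · exact Or.inr (Or.inr (Or.inr ⟨g, rfl, rfl⟩))
  · rintro (⟨rfl, rfl⟩ | ⟨rfl, rfl⟩ | ⟨g, rfl, rfl⟩ | ⟨g, rfl, rfl⟩)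
    · exact ⟨Or.inl rfl, by simp⟩
    · exact ⟨Or.inl (by rw [Sym2.eq_iff]; simp), by simp⟩
    · exact ⟨Or.inr ⟨g, rfl⟩, by simp⟩
    · exact ⟨Or.inr ⟨g, by rw [Sym2.eq_iff]; simp⟩, by simp⟩


theorem stmt18 (n : ℕ) (hn : Odd n)
    (F : SimpleGraph (Option (Bool × ZMod n)))
    (hreg : ∀ v, (F.neighborSet v).ncard = 2)
    (x₀ x₁ : ZMod n)
    -- the neighbours of ∞ are (0, x₀) and (1, x₁)
    (hinf : ∀ v, F.Adj none v ↔ v = some (false, x₀) ∨ v = some (true, x₁))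
    (h00 : {d : ZMod n | ∃ a b : ZMod n,
      F.Adj (some (false, a)) (some (false, b)) ∧ a - b = d} = {d : ZMod n | d ≠ 0})
    (h11 : {d : ZMod n | ∃ a b : ZMod n,
      F.Adj (some (true, a)) (some (true, b)) ∧ a - b = d} = {d : ZMod n | d ≠ 0})
    (h01 : {d : ZMod n | ∃ a b : ZMod n,
      F.Adj (some (false, a)) (some (true, b)) ∧ a - b = d} = Set.univ)
    -- a cycle of `F` contains the edge {(0,y₀),(1,y₁)}
    (y₀ y₁ : ZMod n) (hedge : F.Adj (some (false, y₀)) (some (true, y₁)))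
    -- `H`: replace that edge by the path (0,y₀), ∞′, (1,y₁)
    (H : SimpleGraph (W2 n))
    (hH : H = ((F.map Function.Embedding.some).deleteEdges
        {s((some (some (false, y₀)) : W2 n), some (some (true, y₁)))}) ⊔
      SimpleGraph.fromEdgeSet
        {s((none : W2 n), some (some (false, y₀))),
         s((none : W2 n), some (some (true, y₁)))})
    -- the 1-factor `I`
    (I : SimpleGraph (W2 n))
    (hI : I = SimpleGraph.fromEdgeSet
      ({s((none : W2 n), some (none : Option (Bool × ZMod n)))} ∪
       {e | ∃ g : ZMod n,
          e = s((some (some (false, y₀ + g)) : W2 n), some (some (true, y₁ + g)))})) :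
    -- `I` is a perfect matching of `K_{2n+2}`
    (∀ v : W2 n, ∃! w : W2 n, I.Adj v w) ∧
    -- `{H + g : g ∈ Z_n}` is an edge-decomposition of `K_{2n+2} − I`
    (∀ u v : W2 n, u ≠ v → ¬ I.Adj u v →
      ∃! g : ZMod n, (obTranslate2' H g).Adj u v) := by
  classical
  haveI : NeZero n := ⟨hn.pos.ne'⟩
  obtain ⟨L00, L11, L01⟩ := twoRotCount F hreg x₀ x₁ hinf h00 h11 h01
  have hIadj := Iadj y₀ y₁ I hI
  have hHinf := Hadj_inf F x₀ x₁ y₀ y₁ H hinf hH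
  have hHinfp := Hadj_infp F y₀ y₁ H hH
  have hHmid := Hadj_mid F y₀ y₁ H hH
  have hInn : I.Adj none (some none) := by rw [hIadj]; exact Or.inl ⟨rfl, rfl⟩
  constructor
  · -- perfect matching
    intro v
    rcases v with _ | (_ | ⟨i, a⟩)
    · refine ⟨some none, hInn, ?_⟩
      intro w hw
      rw [hIadj] at hw
      rcases hw with ⟨-, rfl⟩ | ⟨h, -⟩ | ⟨g, h, -⟩ | ⟨g, h, -⟩
      · rfl
      · simp at h
      · simp at h
      · simp at h
    · refine ⟨none, hInn.symm, ?_⟩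
      intro w hw
      rw [hIadj] at hw
      rcases hw with ⟨h, -⟩ | ⟨-, rfl⟩ | ⟨g, h, -⟩ | ⟨g, h, -⟩
      · simp at h
      · rfl
      · simp at h
      · simp at h
    · cases i
      · refine ⟨some (some (true, y₁ + (a - y₀))), ?_, ?_⟩
        · beta_reduce
          rw [hIadj]
          refine Or.inr (Or.inr (Or.inl ⟨a - y₀, ?_, rfl⟩))
          congr 3
          ring
        · intro w hw
          rw [hIadj] at hw
          rcases hw with ⟨h, -⟩ | ⟨h, -⟩ | ⟨g, h, rfl⟩ | ⟨g, h, -⟩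
          · simp at h
          · simp at h
          · simp only [Option.some.injEq, Prod.mk.injEq, true_and] at h
            have hg : g = a - y₀ := by linear_combination -h
            rw [hg]
          · simp at h
      · refine ⟨some (some (false, y₀ + (a - y₁))), ?_, ?_⟩
        · beta_reduce
          rw [hIadj]
          refine Or.inr (Or.inr (Or.inr ⟨a - y₁, ?_, rfl⟩))
          congr 3
          ring
        · intro w hw
          rw [hIadj] at hw
          rcases hw with ⟨h, -⟩ | ⟨h, -⟩ | ⟨g, h, -⟩ | ⟨g, h, rfl⟩
          · simp at h
          · simp at h
          · simp at h
          · simp only [Option.some.injEq, Prod.mk.injEq, true_and] at h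
            have hg : g = a - y₁ := by linear_combination -h
            rw [hg]
  · -- decomposition
    have hsymmP : ∀ u v : W2 n, (∃! g : ZMod n, (obTranslate2' H g).Adj u v) →
        (∃! g : ZMod n, (obTranslate2' H g).Adj v u) := by
      rintro u v ⟨g, hg, hu⟩
      exact ⟨g, hg.symm, fun g' h' => hu g' h'.symm⟩
    have case_inf : ∀ (i : Bool) (a : ZMod n),
        ∃! g : ZMod n, (obTranslate2' H g).Adj (some none) (some (some (i, a))) := by
      intro i a
      cases i
      · refine ⟨a - x₀, ?_, ?_⟩
        · beta_reduce
          rw [hmapadj, hs2, hs3, hHinf]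
          left
          rw [sub_sub_cancel]
        · intro g' hg'
          beta_reduce at hg'
          rw [hmapadj, hs2, hs3, hHinf] at hg'
          rcases hg' with h | h
          · simp only [Option.some.injEq, Prod.mk.injEq, true_and] at h
            linear_combination -h
          · simp at h
      · refine ⟨a - x₁, ?_, ?_⟩
        · beta_reduce
          rw [hmapadj, hs2, hs3, hHinf]
          right
          rw [sub_sub_cancel]
        · intro g' hg'
          beta_reduce at hg'
          rw [hmapadj, hs2, hs3, hHinf] at hg'
          rcases hg' with h | h
          · simp at h
          · simp only [Option.some.injEq, Prod.mk.injEq, true_and] at h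
            linear_combination -h
    have case_infp : ∀ (i : Bool) (a : ZMod n),
        ∃! g : ZMod n, (obTranslate2' H g).Adj none (some (some (i, a))) := by
      intro i a
      cases i
      · refine ⟨a - y₀, ?_, ?_⟩
        · beta_reduce
          rw [hmapadj, hs1, hs3, hHinfp]
          left
          rw [sub_sub_cancel]
        · intro g' hg'
          beta_reduce at hg'
          rw [hmapadj, hs1, hs3, hHinfp] at hg'
          rcases hg' with h | h
          · simp only [Option.some.injEq, Prod.mk.injEq, true_and] at h
            linear_combination -h
          · simp at h
      · refine ⟨a - y₁, ?_, ?_⟩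
        · beta_reduce
          rw [hmapadj, hs1, hs3, hHinfp]
          right
          rw [sub_sub_cancel]
        · intro g' hg'
          beta_reduce at hg'
          rw [hmapadj, hs1, hs3, hHinfp] at hg'
          rcases hg' with h | h
          · simp at h
          · simp only [Option.some.injEq, Prod.mk.injEq, true_and] at h
            linear_combination -h
    have casePP : ∀ (i : Bool)
        (L : ∀ d : ZMod n, d ≠ 0 → ∃! p : ZMod n × ZMod n,
          F.Adj (some (i, p.1)) (some (i, p.2)) ∧ p.1 - p.2 = d)
        (a b : ZMod n), a ≠ b →
        ∃! g : ZMod n, (obTranslate2' H g).Adj (some (some (i, a))) (some (some (i, b))) := by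
      intro i L a b hab
      obtain ⟨p, ⟨hpadj, hpd⟩, hpu⟩ := L (a - b) (sub_ne_zero.mpr hab)
      refine ⟨a - p.1, ?_, ?_⟩
      · beta_reduce
        rw [hmapadj, hs3, hs3, hHmid]
        constructor
        · have h1 : a - (a - p.1) = p.1 := sub_sub_cancel a p.1
          have h2 : b - (a - p.1) = p.2 := by linear_combination hpd
          rw [h1, h2]
          exact hpadj
        · rintro (⟨h1, -, h2, -⟩ | ⟨h1, -, h2, -⟩) <;> simp [h1] at h2
      · intro g' hg'
        beta_reduce at hg'
        rw [hmapadj, hs3, hs3, hHmid] at hg'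
        have key := hpu (a - g', b - g') ⟨hg'.1, by ring⟩
        have h1 : a - g' = p.1 := by rw [← key]
        rw [← h1, sub_sub_cancel]
    have case01 : ∀ (a b : ZMod n),
        ¬ I.Adj (some (some (false, a))) (some (some (true, b))) →
        ∃! g : ZMod n, (obTranslate2' H g).Adj
          (some (some (false, a))) (some (some (true, b))) := by
      intro a b hnI
      obtain ⟨p, ⟨hpadj, hpd⟩, hpu⟩ := L01 (a - b)
      have hpne : ¬(p.1 = y₀ ∧ p.2 = y₁) := by
        rintro ⟨hp1, hp2⟩
        apply hnI
        rw [hIadj]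
        refine Or.inr (Or.inr (Or.inl ⟨a - y₀, ?_, ?_⟩))
        · congr 3
          ring
        · congr 3
          rw [hp1, hp2] at hpd
          linear_combination hpd
      refine ⟨a - p.1, ?_, ?_⟩
      · beta_reduce
        rw [hmapadj, hs3, hs3, hHmid]
        constructor
        · have h1 : a - (a - p.1) = p.1 := sub_sub_cancel a p.1
          have h2 : b - (a - p.1) = p.2 := by linear_combination hpd
          rw [h1, h2]
          exact hpadj
        · rintro (⟨-, h1, -, h2⟩ | ⟨h1, -, h2, -⟩)
          · rw [sub_sub_cancel] at h1
            have h2' : b - (a - p.1) = p.2 := by linear_combination hpd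
            rw [h2'] at h2
            exact hpne ⟨h1, h2⟩
          · simp at h1
      · intro g' hg'
        beta_reduce at hg'
        rw [hmapadj, hs3, hs3, hHmid] at hg'
        have key := hpu (a - g', b - g') ⟨hg'.1, by ring⟩
        have h1 : a - g' = p.1 := by rw [← key]
        rw [← h1, sub_sub_cancel]
    intro u v huv hIuv
    rcases u with _ | (_ | ⟨iu, au⟩) <;> rcases v with _ | (_ | ⟨iv, av⟩)
    · exact absurd rfl huv
    · exact absurd hInn hIuv
    · exact case_infp iv av
    · exact absurd hInn.symm hIuv
    · exact absurd rfl huv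
    · exact case_inf iv av
    · exact hsymmP _ _ (case_infp iu au)
    · exact hsymmP _ _ (case_inf iu au)
    · cases iu <;> cases iv
      · refine casePP false L00 au av ?_
        intro h
        exact huv (by rw [h])
      · exact case01 au av hIuv
      · exact hsymmP _ _ (case01 av au (fun h => hIuv h.symm))
      · refine casePP true L11 au av ?_
        intro h
        exact huv (by rw [h])
end
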